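/- Let φ₀ : (A, π₀) → (B, σ₀) be a Poisson morphism of Poisson algebras over a field of characteristic zero, and let π, σ be formal Poisson deformations of π₀, σ₀ on A[[λ]] and B[[λ]]. Suppose X_{(k)} ∈ λ·Der(B)[[λ]] is such that Φ_{(k)} := exp(X_{(k)}) satisfies Φ_{(k)}⁻¹ σ(Φ_{(k)}φ₀(a₁), Φ_{(k)}φ₀(a₂)) = φ₀(π(a₁,a₂)) + λ^{k+1} R_{k+1}(a₁,a₂) + O(λ^{k+2}) for all a₁,a₂ ∈ A. Then the bilinear map R_{k+1} : A×A → B is antisymmetric, a derivation along φ₀ in each argument, and a Chevalley–Eilenberg 2-cocycle: δR_{k+1} = 0. -/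

import Mathlib

/-- A Poisson bracket on a commutative ring: an antisymmetric biderivation
satisfying the Jacobi identity. -/
structure IsPoissonBr {R : Type*} [CommRing R] (br : R → R → R) : Prop where
  add_left : ∀ x y z, br (x + y) z = br x z + br y z
  add_right : ∀ x y z, br x (y + z) = br x y + br x z
  antisymm : ∀ x y, br x y = - br y x
  leibniz : ∀ x y z, br x (y * z) = br x y * z + y * br x z
  jacobi : ∀ x y z, br x (br y z) = br (br x y) z + br y (br x z)

/-- `D` represents an element `X ∈ λ·Der(B)[[λ]]`, i.e. a formal derivation of `B[[λ]]`
(additive, `K`-linear, Leibniz, `λ`-linear) whose zeroth order term vanishes. -/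
def IsFormalDer (K : Type*) {B : Type*} [Field K] [CommRing B] [Algebra K B]
    (D : PowerSeries B → PowerSeries B) : Prop :=
  (∀ f g, D (f + g) = D f + D g) ∧
  (∀ (c : K) (f : PowerSeries B), D (c • f) = c • D f) ∧
  (∀ f g, D (f * g) = D f * g + f * D g) ∧
  (∀ f, D (PowerSeries.X * f) = PowerSeries.X * D f) ∧
  (∀ f, PowerSeries.coeff (R := B) 0 (D f) = 0)

/-- The exponential `exp(D) = id + D + D²/2! + ⋯`, well defined in each `λ`-order. -/
noncomputable def expF (K : Type*) {B : Type*} [Field K] [CommRing B] [Algebra K B]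
    (D : PowerSeries B → PowerSeries B) : PowerSeries B → PowerSeries B :=
  fun f => PowerSeries.mk fun n =>
    ∑ m ∈ Finset.range (n + 1), ((m.factorial : K)⁻¹) • PowerSeries.coeff (R := B) n (D^[m] f)

set_option linter.unusedSectionVars false
open PowerSeries Finset

/-- triangular reindexing -/
lemma st8_tri {M : Type*} [AddCommMonoid M] (n : ℕ) (t : ℕ → ℕ → M)
    (ht : ∀ m j, n < m + j → t m j = 0) :
    ∑ m ∈ range (n+1), ∑ j ∈ range (n+1), t m j
      = ∑ s ∈ range (n+1), ∑ m ∈ range (s+1), t m (s - m) := by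
  have hdisj : (↑(range (n+1)) : Set ℕ).PairwiseDisjoint Finset.HasAntidiagonal.antidiagonal := by
    intro s _ s' _ hss
    apply Finset.disjoint_left.2
    intro p hp hp'
    simp only [Finset.HasAntidiagonal.mem_antidiagonal] at hp hp'
    exact hss (by omega)
  have hsub : (range (n+1)).biUnion Finset.HasAntidiagonal.antidiagonal ⊆ range (n+1) ×ˢ range (n+1) := by
    intro p hp
    simp only [Finset.mem_biUnion, Finset.mem_range, Finset.HasAntidiagonal.mem_antidiagonal] at hp
    obtain ⟨s, hs, hps⟩ := hp
    simp only [Finset.mem_product, Finset.mem_range]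
    omega
  calc ∑ m ∈ range (n+1), ∑ j ∈ range (n+1), t m j
      = ∑ p ∈ range (n+1) ×ˢ range (n+1), t p.1 p.2 := (Finset.sum_product' _ _ _).symm
    _ = ∑ p ∈ (range (n+1)).biUnion Finset.HasAntidiagonal.antidiagonal, t p.1 p.2 := by
        refine (Finset.sum_subset hsub ?_).symm
        intro p hp hnp
        apply ht
        by_contra h
        push_neg at h
        exact hnp (Finset.mem_biUnion.2 ⟨p.1 + p.2, Finset.mem_range.2 (by omega),
          Finset.HasAntidiagonal.mem_antidiagonal.2 rfl⟩)
    _ = ∑ s ∈ range (n+1), ∑ p ∈ Finset.HasAntidiagonal.antidiagonal s, t p.1 p.2 :=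
        Finset.sum_biUnion hdisj
    _ = ∑ s ∈ range (n+1), ∑ m ∈ range (s+1), t m (s - m) := by
        refine Finset.sum_congr rfl fun s _ => ?_
        rw [Finset.Nat.sum_antidiagonal_eq_sum_range_succ_mk]

section PB
variable {R : Type*} [CommRing R] {br : R → R → R}

lemma pb_zero_left (h : IsPoissonBr br) (g : R) : br 0 g = 0 := by
  have h1 := h.add_left 0 0 g
  rw [add_zero] at h1
  have h2 : br 0 g + 0 = br 0 g + br 0 g := by rw [add_zero]; exact h1
  exact (add_left_cancel h2).symm

lemma pb_zero_right (h : IsPoissonBr br) (f : R) : br f 0 = 0 := by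
  rw [h.antisymm, pb_zero_left h, neg_zero]

lemma pb_neg_right (h : IsPoissonBr br) (f g : R) : br f (-g) = - br f g := by
  have h1 := h.add_right f g (-g)
  rw [add_neg_cancel, pb_zero_right h] at h1
  exact eq_neg_of_add_eq_zero_right h1.symm

lemma pb_neg_left (h : IsPoissonBr br) (f g : R) : br (-f) g = - br f g := by
  have h1 := h.add_left f (-f) g
  rw [add_neg_cancel, pb_zero_left h] at h1
  exact eq_neg_of_add_eq_zero_right h1.symm

lemma pb_sub_right (h : IsPoissonBr br) (f g g' : R) : br f (g - g') = br f g - br f g' := by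
  rw [sub_eq_add_neg, h.add_right, pb_neg_right h, sub_eq_add_neg]

lemma pb_leibniz_left (h : IsPoissonBr br) (x y z : R) :
    br (x * y) z = br x z * y + x * br y z := by
  rw [h.antisymm, h.leibniz, neg_add, h.antisymm z x, h.antisymm z y]
  ring

lemma pb_cyclic (h : IsPoissonBr br) (x y z : R) :
    br x (br y z) + br y (br z x) + br z (br x y) = 0 := by
  have hj := h.jacobi x y z
  have h1 : br y (br z x) = - br y (br x z) := by
    rw [h.antisymm z x, pb_neg_right h]
  have h2 : br z (br x y) = - br (br x y) z := by rw [h.antisymm]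
  rw [h1, h2, hj]; ring

end PB

section FD
variable {K : Type*} {B : Type*} [Field K] [CharZero K] [CommRing B] [Algebra K B]
variable {D : PowerSeries B → PowerSeries B}

lemma fd_zero (hD : IsFormalDer K D) : D 0 = 0 := by
  have h1 := hD.1 0 0
  rw [add_zero] at h1
  have h2 : D 0 + 0 = D 0 + D 0 := by rw [add_zero]; exact h1
  exact (add_left_cancel h2).symm

lemma fd_neg' (hD : IsFormalDer K D) (f : PowerSeries B) : D (-f) = - D f := by
  have h1 := hD.1 f (-f)
  rw [add_neg_cancel, fd_zero hD] at h1
  exact eq_neg_of_add_eq_zero_right h1.symm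

lemma fd_negD (hD : IsFormalDer K D) : IsFormalDer K (fun g => -(D g)) := by
  obtain ⟨hadd, hsmul, hleib, hX, h0⟩ := hD
  refine ⟨fun f g => by simp only [hadd, neg_add], fun c f => by simp only [hsmul, smul_neg],
    fun f g => by simp only [hleib, neg_add, neg_mul, mul_neg],
    fun f => by simp only [hX, mul_neg], fun f => by rw [map_neg, h0, neg_zero]⟩

lemma fd_iter_add (hD : IsFormalDer K D) (m : ℕ) (f g : PowerSeries B) :
    D^[m] (f + g) = D^[m] f + D^[m] g := by
  induction m generalizing f g with
  | zero => simp
  | succ m ih => simp only [Function.iterate_succ_apply]; rw [hD.1, ih]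

lemma fd_iter_zero (hD : IsFormalDer K D) (m : ℕ) : D^[m] 0 = 0 := by
  induction m with
  | zero => simp
  | succ m ih => simp only [Function.iterate_succ_apply]; rw [fd_zero hD, ih]

lemma fd_iter_neg (hD : IsFormalDer K D) (m : ℕ) (f : PowerSeries B) :
    D^[m] (-f) = - D^[m] f := by
  have h1 := fd_iter_add hD m f (-f)
  rw [add_neg_cancel, fd_iter_zero hD] at h1
  exact eq_neg_of_add_eq_zero_right h1.symm

lemma fd_iter_smul (hD : IsFormalDer K D) (m : ℕ) (c : K) (f : PowerSeries B) :
    D^[m] (c • f) = c • D^[m] f := by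
  induction m generalizing f with
  | zero => simp
  | succ m ih => simp only [Function.iterate_succ_apply]; rw [hD.2.1, ih]

lemma fd_iter_X (hD : IsFormalDer K D) (m : ℕ) (f : PowerSeries B) :
    D^[m] (PowerSeries.X * f) = PowerSeries.X * D^[m] f := by
  induction m generalizing f with
  | zero => simp
  | succ m ih => simp only [Function.iterate_succ_apply]; rw [hD.2.2.2.1, ih]

lemma fd_Xpow (hD : IsFormalDer K D) (j : ℕ) (f : PowerSeries B) :
    D (PowerSeries.X ^ j * f) = PowerSeries.X ^ j * D f := by
  induction j generalizing f with
  | zero => simp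
  | succ j ih =>
      rw [pow_succ, mul_comm (PowerSeries.X ^ j) PowerSeries.X, mul_assoc, hD.2.2.2.1, ih,
        ← mul_assoc, mul_comm PowerSeries.X (PowerSeries.X ^ j), mul_assoc]

lemma fd_iter_Xpow (hD : IsFormalDer K D) (m j : ℕ) (f : PowerSeries B) :
    D^[m] (PowerSeries.X ^ j * f) = PowerSeries.X ^ j * D^[m] f := by
  induction m generalizing f with
  | zero => simp
  | succ m ih => simp only [Function.iterate_succ_apply]; rw [fd_Xpow hD, ih]

lemma fd_iter_dvd (hD : IsFormalDer K D) (m : ℕ) (f : PowerSeries B) :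
    (PowerSeries.X : PowerSeries B) ^ m ∣ D^[m] f := by
  induction m with
  | zero => simp
  | succ m ih =>
      obtain ⟨h, hh⟩ := ih
      have h1 : (PowerSeries.X : PowerSeries B) ∣ D h := by
        rw [PowerSeries.X_dvd_iff, ← PowerSeries.coeff_zero_eq_constantCoeff_apply]
        exact hD.2.2.2.2 h
      obtain ⟨h', hh'⟩ := h1
      refine ⟨h', ?_⟩
      rw [Function.iterate_succ_apply', hh, fd_Xpow hD, hh', pow_succ]
      ring

lemma fd_iter_coeff_zero (hD : IsFormalDer K D) {m n : ℕ} (h : n < m) (f : PowerSeries B) :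
    PowerSeries.coeff (R := B) n (D^[m] f) = 0 :=
  PowerSeries.X_pow_dvd_iff.1 (fd_iter_dvd hD m f) n h

lemma fd_sum (hD : IsFormalDer K D) {ι : Type*} (s : Finset ι) (F : ι → PowerSeries B) :
    D (∑ i ∈ s, F i) = ∑ i ∈ s, D (F i) :=
  map_sum (AddMonoidHom.mk' D hD.1) F s

lemma fd_nsmul (hD : IsFormalDer K D) (n : ℕ) (f : PowerSeries B) :
    D (n • f) = n • D f :=
  map_nsmul (AddMonoidHom.mk' D hD.1) n f

lemma fd_iter_leibniz (hD : IsFormalDer K D) (n : ℕ) (p q : PowerSeries B) :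
    D^[n] (p * q) =
      ∑ k ∈ range n.succ, (n.choose k • (D^[n - k] p * D^[k] q)) := by
  induction n with
  | zero =>
    simp [Finset.range]
  | succ n IH =>
    calc
      D^[n + 1] (p * q) =
          D (∑ k ∈ range n.succ,
              n.choose k • (D^[n - k] p * D^[k] q)) := by
        rw [Function.iterate_succ_apply', IH]
      _ = (∑ k ∈ range n.succ,
            n.choose k • (D^[n - k + 1] p * D^[k] q)) +
          ∑ k ∈ range n.succ,
            n.choose k • (D^[n - k] p * D^[k + 1] q) := by
        rw [fd_sum hD]
        simp_rw [fd_nsmul hD, hD.2.2.1, Function.iterate_succ_apply',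
          smul_add, sum_add_distrib]
      _ = (∑ k ∈ range n.succ,
                n.choose k.succ • (D^[n - k] p * D^[k + 1] q)) +
              1 • (D^[n + 1] p * D^[0] q) +
            ∑ k ∈ range n.succ, n.choose k • (D^[n - k] p * D^[k + 1] q) :=
        ?_
      _ = ((∑ k ∈ range n.succ, n.choose k • (D^[n - k] p * D^[k + 1] q)) +
              ∑ k ∈ range n.succ,
                n.choose k.succ • (D^[n - k] p * D^[k + 1] q)) +
            1 • (D^[n + 1] p * D^[0] q) := by
        rw [add_comm, add_assoc]
      _ = (∑ i ∈ range n.succ,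
              (n + 1).choose (i + 1) • (D^[n + 1 - (i + 1)] p * D^[i + 1] q)) +
            1 • (D^[n + 1] p * D^[0] q) := by
        simp_rw [Nat.choose_succ_succ, Nat.succ_sub_succ, add_smul, sum_add_distrib]
      _ = ∑ k ∈ range n.succ.succ,
            n.succ.choose k • (D^[n.succ - k] p * D^[k] q) := by
        rw [sum_range_succ' _ n.succ, Nat.choose_zero_right, tsub_zero]
    congr
    refine (sum_range_succ' _ _).trans (congr_arg₂ (· + ·) ?_ ?_)
    · rw [sum_range_succ, Nat.choose_succ_self, zero_smul, add_zero]
      refine sum_congr rfl fun k hk => ?_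
      rw [mem_range] at hk
      congr
      omega
    · rw [Nat.choose_zero_right, tsub_zero]

end FD

section EXP
variable {K : Type*} {B : Type*} [Field K] [CharZero K] [CommRing B] [Algebra K B]
variable {D : PowerSeries B → PowerSeries B}

lemma exp_coeff (D : PowerSeries B → PowerSeries B) (f : PowerSeries B) (n : ℕ) :
    PowerSeries.coeff (R := B) n (expF K D f)
      = ∑ m ∈ range (n + 1), ((m.factorial : K)⁻¹) • PowerSeries.coeff (R := B) n (D^[m] f) :=
  PowerSeries.coeff_mk _ _

lemma exp_coeff_pad (hD : IsFormalDer K D) (f : PowerSeries B) {n N : ℕ} (h : n < N) :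
    PowerSeries.coeff (R := B) n (expF K D f)
      = ∑ m ∈ range N, ((m.factorial : K)⁻¹) • PowerSeries.coeff (R := B) n (D^[m] f) := by
  rw [exp_coeff]
  apply Finset.sum_subset
  · exact Finset.range_subset_range.2 h
  · intro m _ hm
    rw [Finset.mem_range, not_lt] at hm
    rw [fd_iter_coeff_zero hD (by omega), smul_zero]

lemma exp_add (hD : IsFormalDer K D) (f g : PowerSeries B) :
    expF K D (f + g) = expF K D f + expF K D g := by
  ext n
  rw [map_add, exp_coeff, exp_coeff, exp_coeff, ← Finset.sum_add_distrib]
  refine Finset.sum_congr rfl fun m _ => ?_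
  rw [fd_iter_add hD, map_add, smul_add]

lemma exp_neg' (hD : IsFormalDer K D) (f : PowerSeries B) :
    expF K D (-f) = - expF K D f := by
  ext n
  rw [map_neg, exp_coeff, exp_coeff, ← Finset.sum_neg_distrib]
  refine Finset.sum_congr rfl fun m _ => ?_
  rw [fd_iter_neg hD, map_neg, smul_neg]

lemma exp_coeff_zero (hD : IsFormalDer K D) (f : PowerSeries B) :
    PowerSeries.coeff (R := B) 0 (expF K D f) = PowerSeries.coeff (R := B) 0 f := by
  rw [exp_coeff]
  simp

lemma exp_X (hD : IsFormalDer K D) (f : PowerSeries B) :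
    expF K D (PowerSeries.X * f) = PowerSeries.X * expF K D f := by
  ext n
  cases n with
  | zero =>
      rw [PowerSeries.coeff_zero_X_mul, exp_coeff_zero hD, PowerSeries.coeff_zero_X_mul]
  | succ n =>
      rw [PowerSeries.coeff_succ_X_mul, exp_coeff, exp_coeff_pad hD f (Nat.lt_succ_of_lt
        (Nat.lt_succ_self n))]
      refine Finset.sum_congr rfl fun m _ => ?_
      rw [fd_iter_X hD, PowerSeries.coeff_succ_X_mul]

lemma exp_congr (hD : IsFormalDer K D) {f g : PowerSeries B} {N : ℕ}
    (h : (PowerSeries.X : PowerSeries B) ^ N ∣ f - g) {n : ℕ} (hn : n < N) :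
    PowerSeries.coeff (R := B) n (expF K D f) = PowerSeries.coeff (R := B) n (expF K D g) := by
  obtain ⟨h', hh⟩ := h
  have hfg : f = g + PowerSeries.X ^ N * h' := by rw [← hh]; ring
  rw [hfg, exp_coeff, exp_coeff]
  refine Finset.sum_congr rfl fun m _ => ?_
  rw [fd_iter_add hD, map_add, fd_iter_Xpow hD]
  have : PowerSeries.coeff (R := B) n (PowerSeries.X ^ N * D^[m] h') = 0 := by
    refine PowerSeries.X_pow_dvd_iff.1 ⟨D^[m] h', rfl⟩ n hn
  rw [this, add_zero]

end EXP

section EXP2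
variable {K : Type*} {B : Type*} [Field K] [CharZero K] [CommRing B] [Algebra K B]
variable {D : PowerSeries B → PowerSeries B}

lemma fact_inv_choose {i m : ℕ} (h : i ≤ m) :
    ((m.factorial : K))⁻¹ * (m.choose i : K)
      = ((i.factorial : K))⁻¹ * (((m - i).factorial : K))⁻¹ := by
  have hm := Nat.choose_mul_factorial_mul_factorial h
  have h2 : (m.choose i : K) * (i.factorial : K) * ((m - i).factorial : K)
      = (m.factorial : K) := by exact_mod_cast congrArg (Nat.cast : ℕ → K) hm
  have hi : (i.factorial : K) ≠ 0 := Nat.cast_ne_zero.2 (Nat.factorial_ne_zero i)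
  have hmi : (((m - i).factorial : K)) ≠ 0 := Nat.cast_ne_zero.2 (Nat.factorial_ne_zero _)
  have hmm : ((m.factorial : K)) ≠ 0 := Nat.cast_ne_zero.2 (Nat.factorial_ne_zero m)
  field_simp
  linear_combination h2

lemma exp_mul (hD : IsFormalDer K D) (f g : PowerSeries B) :
    expF K D (f * g) = expF K D f * expF K D g := by
  ext n
  set u : ℕ → ℕ → B := fun a b =>
    (((a.factorial : K))⁻¹ * ((b.factorial : K))⁻¹) •
      (PowerSeries.coeff (R := B) n (D^[a] f * D^[b] g)) with hu
  have hvanish : ∀ a b, n < a + b → PowerSeries.coeff (R := B) n (D^[a] f * D^[b] g) = 0 := by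
    intro a b hab
    have hdvd : (PowerSeries.X : PowerSeries B) ^ (a + b) ∣ D^[a] f * D^[b] g := by
      rw [pow_add]; exact mul_dvd_mul (fd_iter_dvd hD a f) (fd_iter_dvd hD b g)
    exact PowerSeries.X_pow_dvd_iff.1 hdvd n hab
  have hL : PowerSeries.coeff (R := B) n (expF K D (f * g))
      = ∑ s ∈ range (n+1), ∑ k ∈ range (s+1), u (s - k) k := by
    rw [exp_coeff]
    refine Finset.sum_congr rfl fun s _ => ?_
    rw [fd_iter_leibniz hD, map_sum, Finset.smul_sum]
    refine Finset.sum_congr rfl fun k hk => ?_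
    rw [Finset.mem_range, Nat.lt_succ_iff] at hk
    rw [map_nsmul, ← Nat.cast_smul_eq_nsmul K, smul_smul, fact_inv_choose hk, hu]
    congr 1
    ring
  have hR : PowerSeries.coeff (R := B) n (expF K D f * expF K D g)
      = ∑ a ∈ range (n+1), ∑ b ∈ range (n+1), u a b := by
    calc PowerSeries.coeff (R := B) n (expF K D f * expF K D g)
        = ∑ q ∈ range (n+1), ∑ a ∈ range (n+1), ∑ b ∈ range (n+1),
            (((a.factorial : K))⁻¹ * ((b.factorial : K))⁻¹) •
              (PowerSeries.coeff (R := B) q (D^[a] f) * PowerSeries.coeff (R := B) (n-q) (D^[b] g)) := by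
          rw [PowerSeries.coeff_mul, Finset.Nat.sum_antidiagonal_eq_sum_range_succ_mk]
          refine Finset.sum_congr rfl fun q hq => ?_
          rw [Finset.mem_range] at hq
          rw [exp_coeff_pad hD f hq,
            exp_coeff_pad hD g (lt_of_le_of_lt (Nat.sub_le n q) (Nat.lt_succ_self n)),
            Finset.sum_mul_sum]
          exact Finset.sum_congr rfl fun a _ => Finset.sum_congr rfl fun b _ => by
            rw [smul_mul_smul_comm]
      _ = ∑ a ∈ range (n+1), ∑ b ∈ range (n+1),
            (((a.factorial : K))⁻¹ * ((b.factorial : K))⁻¹) •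
              ∑ q ∈ range (n+1),
                PowerSeries.coeff (R := B) q (D^[a] f) * PowerSeries.coeff (R := B) (n-q) (D^[b] g) := by
          rw [Finset.sum_comm]
          refine Finset.sum_congr rfl fun a _ => ?_
          rw [Finset.sum_comm]
          exact Finset.sum_congr rfl fun b _ => (Finset.smul_sum).symm
      _ = ∑ a ∈ range (n+1), ∑ b ∈ range (n+1), u a b := by
          refine Finset.sum_congr rfl fun a _ => Finset.sum_congr rfl fun b _ => ?_
          rw [hu]
          congr 1
          rw [PowerSeries.coeff_mul, Finset.Nat.sum_antidiagonal_eq_sum_range_succ_mk]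
  rw [hL, hR, ← st8_tri n (fun m j => u j m) ?_]
  · exact Finset.sum_comm
  · intro m j h
    rw [hu]
    simp only
    rw [hvanish j m (by omega), smul_zero]

end EXP2

section EXP3
variable {K : Type*} {B : Type*} [Field K] [CharZero K] [CommRing B] [Algebra K B]
variable {D : PowerSeries B → PowerSeries B}

lemma fd_iter_sum (hD : IsFormalDer K D) (m : ℕ) {ι : Type*} (s : Finset ι)
    (F : ι → PowerSeries B) : D^[m] (∑ i ∈ s, F i) = ∑ i ∈ s, D^[m] (F i) :=
  map_sum (AddMonoidHom.mk' D^[m] (fd_iter_add hD m)) F s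

lemma negD_iter (hD : IsFormalDer K D) (m : ℕ) (h : PowerSeries B) :
    (fun g => -(D g))^[m] h = ((-1 : K)^m) • D^[m] h := by
  induction m with
  | zero => simp
  | succ m ih =>
      rw [Function.iterate_succ_apply', ih]
      show -(D (((-1 : K)^m) • D^[m] h)) = ((-1 : K)^(m+1)) • D^[m+1] h
      rw [hD.2.1, Function.iterate_succ_apply', pow_succ, mul_comm, mul_smul, neg_one_smul]

lemma alt_sum_fact (s : ℕ) :
    ∑ m ∈ range (s+1), ((-1 : K)^m * ((m.factorial : K))⁻¹ * (((s-m).factorial : K))⁻¹)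
      = if s = 0 then 1 else 0 := by
  have h1 : ∀ m ∈ range (s+1),
      ((-1 : K)^m * ((m.factorial : K))⁻¹ * (((s-m).factorial : K))⁻¹)
        = ((s.factorial : K))⁻¹ * ((-1 : K)^m * (s.choose m : K)) := by
    intro m hm
    rw [Finset.mem_range, Nat.lt_succ_iff] at hm
    have := fact_inv_choose (K := K) hm
    calc (-1 : K)^m * ((m.factorial : K))⁻¹ * (((s-m).factorial : K))⁻¹
        = (-1 : K)^m * (((m.factorial : K))⁻¹ * (((s-m).factorial : K))⁻¹) := by ring
      _ = (-1 : K)^m * (((s.factorial : K))⁻¹ * (s.choose m : K)) := by rw [← this]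
      _ = ((s.factorial : K))⁻¹ * ((-1 : K)^m * (s.choose m : K)) := by ring
  rw [Finset.sum_congr rfl h1, ← Finset.mul_sum]
  have h2 : (∑ m ∈ range (s+1), ((-1 : K)^m * (s.choose m : K)))
      = ((∑ m ∈ range (s+1), ((-1 : ℤ)^m * (s.choose m : ℤ)) : ℤ) : K) := by
    push_cast
    rfl
  rw [h2, Int.alternating_sum_range_choose]
  by_cases hs : s = 0
  · subst hs; simp
  · rw [if_neg hs, if_neg hs]
    simp

lemma exp_inv (hD : IsFormalDer K D) (f : PowerSeries B) :
    expF K (fun g => -(D g)) (expF K D f) = f := by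
  ext n
  set S : PowerSeries B :=
    ∑ m ∈ range (n+1), ((m.factorial : K))⁻¹ • D^[m] f with hS
  have hdvd : (PowerSeries.X : PowerSeries B) ^ (n+1) ∣ expF K D f - S := by
    rw [PowerSeries.X_pow_dvd_iff]
    intro j hj
    rw [map_sub, exp_coeff_pad hD f hj, hS, map_sum, sub_eq_zero]
    refine Finset.sum_congr rfl fun m _ => ?_
    rw [PowerSeries.coeff_smul]
  have h1 : PowerSeries.coeff (R := B) n (expF K (fun g => -(D g)) (expF K D f))
      = PowerSeries.coeff (R := B) n (expF K (fun g => -(D g)) S) :=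
    exp_congr (fd_negD hD) hdvd (Nat.lt_succ_self n)
  rw [h1, exp_coeff]
  have h2 : ∀ m, PowerSeries.coeff (R := B) n ((fun g => -(D g))^[m] S)
      = ∑ j ∈ range (n+1),
          ((-1 : K)^m * ((j.factorial : K))⁻¹) • PowerSeries.coeff (R := B) n (D^[m+j] f) := by
    intro m
    rw [negD_iter hD, hS, fd_iter_sum hD, PowerSeries.coeff_smul, map_sum, Finset.smul_sum]
    refine Finset.sum_congr rfl fun j _ => ?_
    rw [fd_iter_smul hD, PowerSeries.coeff_smul, smul_smul, Function.iterate_add_apply]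
  have h3 : (∑ m ∈ range (n+1), ((m.factorial : K))⁻¹ •
        PowerSeries.coeff (R := B) n ((fun g => -(D g))^[m] S))
      = ∑ m ∈ range (n+1), ∑ j ∈ range (n+1),
          ((-1 : K)^m * ((m.factorial : K))⁻¹ * ((j.factorial : K))⁻¹) •
            PowerSeries.coeff (R := B) n (D^[m+j] f) := by
    refine Finset.sum_congr rfl fun m _ => ?_
    rw [h2 m, Finset.smul_sum]
    refine Finset.sum_congr rfl fun j _ => ?_
    rw [smul_smul]
    congr 1
    ring
  rw [h3, st8_tri n _ (fun m j h => by
    rw [fd_iter_coeff_zero hD (by omega), smul_zero])]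
  have h4 : ∀ s ∈ range (n+1), (∑ m ∈ range (s+1),
        ((-1 : K)^m * ((m.factorial : K))⁻¹ * (((s-m).factorial : K))⁻¹) •
          PowerSeries.coeff (R := B) n (D^[m+(s-m)] f))
      = (if s = 0 then (1:K) else 0) • PowerSeries.coeff (R := B) n (D^[s] f) := by
    intro s _
    have h5 : ∀ m ∈ range (s+1),
        ((-1 : K)^m * ((m.factorial : K))⁻¹ * (((s-m).factorial : K))⁻¹) •
          PowerSeries.coeff (R := B) n (D^[m+(s-m)] f)
        = ((-1 : K)^m * ((m.factorial : K))⁻¹ * (((s-m).factorial : K))⁻¹) •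
          PowerSeries.coeff (R := B) n (D^[s] f) := by
      intro m hm
      rw [Finset.mem_range, Nat.lt_succ_iff] at hm
      have hms : m + (s - m) = s := by omega
      rw [hms]
    rw [Finset.sum_congr rfl h5, ← Finset.sum_smul, alt_sum_fact]
  rw [Finset.sum_congr rfl h4]
  rw [Finset.sum_eq_single 0]
  · simp
  · intro s _ hs
    rw [if_neg hs, zero_smul]
  · intro h
    simp at h

lemma exp_inv' (hD : IsFormalDer K D) (f : PowerSeries B) :
    expF K D (expF K (fun g => -(D g)) f) = f := by
  have h := exp_inv (fd_negD hD) f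
  have h2 : (fun g : PowerSeries B => -((fun g => -(D g)) g)) = D := by
    funext g; simp
  rw [h2] at h
  exact h

end EXP3

section EXPAND
variable {R : Type*} [CommRing R]

lemma st8_decomp (g : PowerSeries R) :
    ∃ h, g = PowerSeries.C (R := R) (PowerSeries.coeff (R := R) 0 g) + PowerSeries.X * h := by
  have hdvd : (PowerSeries.X : PowerSeries R) ∣ (g - PowerSeries.C (R := R) (PowerSeries.coeff (R := R) 0 g)) := by
    rw [PowerSeries.X_dvd_iff, ← PowerSeries.coeff_zero_eq_constantCoeff_apply, map_sub,
      PowerSeries.coeff_C]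
    simp
  obtain ⟨h, hh⟩ := hdvd
  exact ⟨h, by rw [← hh]; ring⟩

lemma st8_expand (β : PowerSeries R → PowerSeries R → PowerSeries R)
    (hadd : ∀ f g h, β f (g + h) = β f g + β f h)
    (hX : ∀ f g, β f (PowerSeries.X * g) = PowerSeries.X * β f g) (f : PowerSeries R) :
    ∀ (n : ℕ) (g), PowerSeries.coeff (R := R) n (β f g)
      = ∑ j ∈ range (n+1),
          PowerSeries.coeff (R := R) (n-j) (β f (PowerSeries.C (R := R) (PowerSeries.coeff (R := R) j g))) := by
  intro n
  induction n with
  | zero =>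
      intro g
      obtain ⟨h, hg⟩ := st8_decomp g
      rw [Finset.sum_range_one]
      conv_lhs => rw [hg]
      rw [hadd, hX, map_add, PowerSeries.coeff_zero_X_mul, add_zero]
  | succ n ih =>
      intro g
      obtain ⟨h, hg⟩ := st8_decomp g
      have hcoeff : ∀ j, PowerSeries.coeff (R := R) j h = PowerSeries.coeff (R := R) (j+1) g := by
        intro j
        rw [hg, map_add, PowerSeries.coeff_C, PowerSeries.coeff_succ_X_mul]
        simp
      conv_lhs => rw [hg]
      rw [hadd, hX, map_add, PowerSeries.coeff_succ_X_mul, ih h,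
        Finset.sum_range_succ' _ (n+1), add_comm]
      congr 1
      refine Finset.sum_congr rfl fun j hj => ?_
      rw [hcoeff j, Nat.succ_sub_succ]

end EXPAND

section PB2
variable {R : Type*} [CommRing R] {br : PowerSeries R → PowerSeries R → PowerSeries R}

lemma pb_X_right (h : IsPoissonBr br)
    (hXl : ∀ f g, br (PowerSeries.X * f) g = PowerSeries.X * br f g) (f g : PowerSeries R) :
    br f (PowerSeries.X * g) = PowerSeries.X * br f g := by
  rw [h.antisymm f (PowerSeries.X * g), hXl, h.antisymm g f, mul_neg, neg_neg]

lemma st8_coeff0 (h : IsPoissonBr br)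
    (hXl : ∀ f g, br (PowerSeries.X * f) g = PowerSeries.X * br f g)
    {br0 : R → R → R}
    (h0 : ∀ a b, PowerSeries.coeff (R := R) 0 (br (PowerSeries.C (R := R) a) (PowerSeries.C (R := R) b)) = br0 a b)
    (f g : PowerSeries R) :
    PowerSeries.coeff (R := R) 0 (br f g)
      = br0 (PowerSeries.coeff (R := R) 0 f) (PowerSeries.coeff (R := R) 0 g) := by
  obtain ⟨u, hf⟩ := st8_decomp f
  obtain ⟨v, hg⟩ := st8_decomp g
  conv_lhs => rw [hf, hg]
  rw [h.add_left, h.add_right, hXl, pb_X_right h hXl, map_add, map_add,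
    PowerSeries.coeff_zero_X_mul, PowerSeries.coeff_zero_X_mul, add_zero, add_zero, h0]

end PB2


/-!
Statement 8: let `φ₀ : (A,π₀) → (B,σ₀)` be a Poisson morphism, `π`, `σ` formal Poisson
deformations of `π₀`, `σ₀`, and `X_{(k)} ∈ λ·Der(B)[[λ]]` such that
`Φ_{(k)}⁻¹ σ(Φ_{(k)} φ₀(a₁), Φ_{(k)} φ₀(a₂)) = φ₀(π(a₁,a₂)) + λ^{k+1} R_{k+1}(a₁,a₂) + O(λ^{k+2})`,
where `Φ_{(k)} = exp(X_{(k)})`.  Then `R_{k+1}` is bilinear, antisymmetric, a derivation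
along `φ₀` in each argument, and a Chevalley–Eilenberg 2-cocycle (for the undeformed
brackets).
-/
theorem stmt_8 {K A B : Type*} [Field K] [CharZero K] [CommRing A] [CommRing B]
    [Algebra K B]
    (π₀ : A → A → A) (σ₀ : B → B → B)
    (hπ₀ : IsPoissonBr π₀) (hσ₀ : IsPoissonBr σ₀)
    (φ₀ : A →+* B) (hφ₀ : ∀ x y, φ₀ (π₀ x y) = σ₀ (φ₀ x) (φ₀ y))
    -- formal Poisson deformations of π₀ and σ₀
    (π : PowerSeries A → PowerSeries A → PowerSeries A)
    (σ : PowerSeries B → PowerSeries B → PowerSeries B)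
    (hπ : IsPoissonBr π) (hσ : IsPoissonBr σ)
    (hπX : ∀ f g, π (PowerSeries.X * f) g = PowerSeries.X * π f g)
    (hσX : ∀ f g, σ (PowerSeries.X * f) g = PowerSeries.X * σ f g)
    (hπ0 : ∀ a b : A, PowerSeries.coeff (R := A) 0 (π (PowerSeries.C (R := A) a) (PowerSeries.C (R := A) b))
       = π₀ a b)
    (hσ0 : ∀ a b : B, PowerSeries.coeff (R := B) 0 (σ (PowerSeries.C (R := B) a) (PowerSeries.C (R := B) b))
       = σ₀ a b)
    -- X_{(k)} ∈ λ·Der(B)[[λ]] and Φ_{(k)} = exp(X_{(k)})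
    (D : PowerSeries B → PowerSeries B) (hD : IsFormalDer K D)
    (k : ℕ) (R : A → A → B)
    -- defining property of R_{k+1}
    (hlow : ∀ (a₁ a₂ : A) (m : ℕ), m ≤ k →
      PowerSeries.coeff (R := B) m
        (expF K (fun g => -(D g))
          (σ (expF K D (PowerSeries.C (R := B) (φ₀ a₁))) (expF K D (PowerSeries.C (R := B) (φ₀ a₂))))) =
      PowerSeries.coeff (R := B) m
        (PowerSeries.map (φ₀ : A →+* B) (π (PowerSeries.C (R := A) a₁) (PowerSeries.C (R := A) a₂))))
    (htop : ∀ a₁ a₂ : A,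
      PowerSeries.coeff (R := B) (k + 1)
        (expF K (fun g => -(D g))
          (σ (expF K D (PowerSeries.C (R := B) (φ₀ a₁))) (expF K D (PowerSeries.C (R := B) (φ₀ a₂))))) =
      PowerSeries.coeff (R := B) (k + 1)
        (PowerSeries.map (φ₀ : A →+* B) (π (PowerSeries.C (R := A) a₁) (PowerSeries.C (R := A) a₂)))
        + R a₁ a₂) :
    (∀ a b, R a b = - R b a) ∧
    (∀ a a' b, R (a + a') b = R a b + R a' b) ∧
    (∀ a b b', R a (b + b') = R a b + R a b') ∧
    (∀ a a' b, R (a * a') b = φ₀ a * R a' b + R a b * φ₀ a') ∧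
    (∀ a b b', R a (b * b') = φ₀ b * R a b' + R a b * φ₀ b') ∧
    (∀ a₁ a₂ a₃,
      σ₀ (φ₀ a₁) (R a₂ a₃) + σ₀ (φ₀ a₂) (R a₃ a₁) + σ₀ (φ₀ a₃) (R a₁ a₂)
      + R a₁ (π₀ a₂ a₃) + R a₂ (π₀ a₃ a₁) + R a₃ (π₀ a₁ a₂) = 0) := by
  classical
  have hDneg : IsFormalDer K (fun g => -(D g)) := fd_negD hD
  set T : PowerSeries B → PowerSeries B → PowerSeries B :=
    fun f g => expF K (fun g => -(D g)) (σ (expF K D f) (expF K D g)) with hTdef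
  have hΨΦ : ∀ f, expF K (fun g => -(D g)) (expF K D f) = f := exp_inv hD
  have hΦΨ : ∀ f, expF K D (expF K (fun g => -(D g)) f) = f := exp_inv' hD
  -- T is a Poisson bracket
  have hTadd_l : ∀ f g h, T (f + g) h = T f h + T g h := by
    intro f g h
    simp only [hTdef]
    rw [exp_add hD, hσ.add_left, exp_add hDneg]
  have hTadd_r : ∀ f g h, T f (g + h) = T f g + T f h := by
    intro f g h
    simp only [hTdef]
    rw [exp_add hD, hσ.add_right, exp_add hDneg]
  have hTanti : ∀ f g, T f g = - T g f := by
    intro f g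
    simp only [hTdef]
    rw [hσ.antisymm, ← exp_neg' hDneg]
  have hTleib : ∀ f g h, T f (g * h) = T f g * h + g * T f h := by
    intro f g h
    simp only [hTdef]
    rw [exp_mul hD, hσ.leibniz, exp_add hDneg, exp_mul hDneg, exp_mul hDneg, hΨΦ, hΨΦ]
  have hTjac : ∀ f g h, T f (T g h) = T (T f g) h + T g (T f h) := by
    intro f g h
    simp only [hTdef]
    rw [hΦΨ, hΦΨ, hΦΨ, hσ.jacobi, exp_add hDneg]
  have hTP : IsPoissonBr T := ⟨hTadd_l, hTadd_r, hTanti, hTleib, hTjac⟩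
  have hTX_l : ∀ f g, T (PowerSeries.X * f) g = PowerSeries.X * T f g := by
    intro f g
    simp only [hTdef]
    rw [exp_X hD, hσX, exp_X hDneg]
  have hTX_r : ∀ f g, T f (PowerSeries.X * g) = PowerSeries.X * T f g :=
    pb_X_right hTP hTX_l
  have hT0 : ∀ f g, PowerSeries.coeff (R := B) 0 (T f g)
      = σ₀ (PowerSeries.coeff (R := B) 0 f) (PowerSeries.coeff (R := B) 0 g) := by
    intro f g
    simp only [hTdef]
    rw [exp_coeff_zero hDneg, st8_coeff0 hσ hσX hσ0, exp_coeff_zero hD, exp_coeff_zero hD]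
  -- restated hypotheses
  have hlowT : ∀ (a₁ a₂ : A) (m : ℕ), m ≤ k →
      PowerSeries.coeff (R := B) m (T (PowerSeries.C (R := B) (φ₀ a₁)) (PowerSeries.C (R := B) (φ₀ a₂)))
        = PowerSeries.coeff (R := B) m
            (PowerSeries.map (φ₀ : A →+* B) (π (PowerSeries.C (R := A) a₁) (PowerSeries.C (R := A) a₂))) := by
    intro a₁ a₂ m hm
    rw [hTdef]
    exact hlow a₁ a₂ m hm
  have htopT : ∀ a₁ a₂ : A,
      PowerSeries.coeff (R := B) (k+1) (T (PowerSeries.C (R := B) (φ₀ a₁)) (PowerSeries.C (R := B) (φ₀ a₂)))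
        = PowerSeries.coeff (R := B) (k+1)
            (PowerSeries.map (φ₀ : A →+* B) (π (PowerSeries.C (R := A) a₁) (PowerSeries.C (R := A) a₂)))
          + R a₁ a₂ := by
    intro a₁ a₂
    rw [hTdef]
    exact htop a₁ a₂
  have hπX_r : ∀ f g, π f (PowerSeries.X * g) = PowerSeries.X * π f g :=
    pb_X_right hπ hπX
  -- the key computation
  have hstar : ∀ a₁ a₂ a₃ : A,
      PowerSeries.coeff (R := B) (k+1)
          (T (PowerSeries.C (R := B) (φ₀ a₁))
            (T (PowerSeries.C (R := B) (φ₀ a₂)) (PowerSeries.C (R := B) (φ₀ a₃))))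
        = φ₀ (PowerSeries.coeff (R := A) (k+1)
              (π (PowerSeries.C (R := A) a₁) (π (PowerSeries.C (R := A) a₂) (PowerSeries.C (R := A) a₃))))
          + R a₁ (π₀ a₂ a₃) + σ₀ (φ₀ a₁) (R a₂ a₃) := by
    intro a₁ a₂ a₃
    have hexpT := st8_expand T hTadd_r hTX_r (PowerSeries.C (R := B) (φ₀ a₁)) (k+1)
      (T (PowerSeries.C (R := B) (φ₀ a₂)) (PowerSeries.C (R := B) (φ₀ a₃)))
    have hexpπ := st8_expand π hπ.add_right hπX_r (PowerSeries.C (R := A) a₁) (k+1)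
      (π (PowerSeries.C (R := A) a₂) (PowerSeries.C (R := A) a₃))
    rw [hexpT, hexpπ, map_sum]
    rw [Finset.sum_range_succ, Finset.sum_range_succ
      (fun j => φ₀ (PowerSeries.coeff (R := A) (k+1-j)
        (π (PowerSeries.C (R := A) a₁) (PowerSeries.C (R := A) (PowerSeries.coeff (R := A) j
          (π (PowerSeries.C (R := A) a₂) (PowerSeries.C (R := A) a₃)))))))]
    rw [Finset.sum_range_succ', Finset.sum_range_succ'
      (fun j => φ₀ (PowerSeries.coeff (R := A) (k+1-j)
        (π (PowerSeries.C (R := A) a₁) (PowerSeries.C (R := A) (PowerSeries.coeff (R := A) j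
          (π (PowerSeries.C (R := A) a₂) (PowerSeries.C (R := A) a₃)))))))]
    have hmid : ∀ i ∈ range k,
        PowerSeries.coeff (R := B) (k+1-(i+1))
          (T (PowerSeries.C (R := B) (φ₀ a₁)) (PowerSeries.C (R := B) (PowerSeries.coeff (R := B) (i+1)
            (T (PowerSeries.C (R := B) (φ₀ a₂)) (PowerSeries.C (R := B) (φ₀ a₃))))))
        = φ₀ (PowerSeries.coeff (R := A) (k+1-(i+1))
            (π (PowerSeries.C (R := A) a₁) (PowerSeries.C (R := A) (PowerSeries.coeff (R := A) (i+1)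
              (π (PowerSeries.C (R := A) a₂) (PowerSeries.C (R := A) a₃)))))) := by
      intro i hi
      rw [Finset.mem_range] at hi
      rw [hlowT a₂ a₃ (i+1) (by omega), PowerSeries.coeff_map,
        hlowT a₁ _ (k+1-(i+1)) (by omega), PowerSeries.coeff_map]
    have hA0 :
        PowerSeries.coeff (R := B) (k+1-0)
          (T (PowerSeries.C (R := B) (φ₀ a₁)) (PowerSeries.C (R := B) (PowerSeries.coeff (R := B) 0
            (T (PowerSeries.C (R := B) (φ₀ a₂)) (PowerSeries.C (R := B) (φ₀ a₃))))))
        = φ₀ (PowerSeries.coeff (R := A) (k+1-0)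
            (π (PowerSeries.C (R := A) a₁) (PowerSeries.C (R := A) (PowerSeries.coeff (R := A) 0
              (π (PowerSeries.C (R := A) a₂) (PowerSeries.C (R := A) a₃))))))
          + R a₁ (π₀ a₂ a₃) := by
      rw [hlowT a₂ a₃ 0 (by omega), PowerSeries.coeff_map, hπ0, Nat.sub_zero,
        htopT a₁ (π₀ a₂ a₃), PowerSeries.coeff_map]
    have hAtop :
        PowerSeries.coeff (R := B) (k+1-(k+1))
          (T (PowerSeries.C (R := B) (φ₀ a₁)) (PowerSeries.C (R := B) (PowerSeries.coeff (R := B) (k+1)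
            (T (PowerSeries.C (R := B) (φ₀ a₂)) (PowerSeries.C (R := B) (φ₀ a₃))))))
        = φ₀ (PowerSeries.coeff (R := A) (k+1-(k+1))
            (π (PowerSeries.C (R := A) a₁) (PowerSeries.C (R := A) (PowerSeries.coeff (R := A) (k+1)
              (π (PowerSeries.C (R := A) a₂) (PowerSeries.C (R := A) a₃))))))
          + σ₀ (φ₀ a₁) (R a₂ a₃) := by
      rw [htopT a₂ a₃, PowerSeries.coeff_map, map_add, hTadd_r, map_add, Nat.sub_self,
        hlowT a₁ _ 0 (by omega), PowerSeries.coeff_map, hT0,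
        PowerSeries.coeff_zero_C, PowerSeries.coeff_zero_C]
    rw [Finset.sum_congr rfl hmid, hA0, hAtop]
    ring
  have hR : ∀ a b : A, R a b
      = PowerSeries.coeff (R := B) (k+1) (T (PowerSeries.C (R := B) (φ₀ a)) (PowerSeries.C (R := B) (φ₀ b)))
        - PowerSeries.coeff (R := B) (k+1)
            (PowerSeries.map (φ₀ : A →+* B) (π (PowerSeries.C (R := A) a) (PowerSeries.C (R := A) b))) := by
    intro a b
    rw [htopT a b]
    ring
  have hanti : ∀ a b, R a b = - R b a := by
    intro a b
    rw [hR a b, hR b a, hTanti (PowerSeries.C (R := B) (φ₀ a)) (PowerSeries.C (R := B) (φ₀ b)),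
      hπ.antisymm (PowerSeries.C (R := A) a) (PowerSeries.C (R := A) b)]
    simp only [map_neg]
    ring
  have haddl : ∀ a a' b, R (a+a') b = R a b + R a' b := by
    intro a a' b
    have h1 : (PowerSeries.C (R := B) (φ₀ (a+a')))
        = PowerSeries.C (R := B) (φ₀ a) + PowerSeries.C (R := B) (φ₀ a') := by rw [map_add, map_add]
    have h2 : (PowerSeries.C (R := A) (a+a')) = PowerSeries.C (R := A) a + PowerSeries.C (R := A) a' := by
      rw [map_add]
    rw [hR, hR, hR, h1, h2, hTadd_l, hπ.add_left]
    simp only [map_add]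
    ring
  have haddr : ∀ a b b', R a (b+b') = R a b + R a b' := by
    intro a b b'
    rw [hanti a (b+b'), haddl b b' a, hanti a b, hanti a b']
    ring
  have hmull : ∀ a a' b, R (a*a') b = φ₀ a * R a' b + R a b * φ₀ a' := by
    intro a a' b
    have h1 : (PowerSeries.C (R := B) (φ₀ (a*a')))
        = PowerSeries.C (R := B) (φ₀ a) * PowerSeries.C (R := B) (φ₀ a') := by rw [map_mul, map_mul]
    have h2 : (PowerSeries.C (R := A) (a*a')) = PowerSeries.C (R := A) a * PowerSeries.C (R := A) a' := by
      rw [map_mul]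
    rw [hR, hR, hR, h1, h2, pb_leibniz_left hTP, pb_leibniz_left hπ]
    simp only [map_add, map_mul, PowerSeries.map_C, PowerSeries.coeff_mul_C,
      PowerSeries.coeff_C_mul]
    ring
  have hmulr : ∀ a b b', R a (b*b') = φ₀ b * R a b' + R a b * φ₀ b' := by
    intro a b b'
    rw [hanti a (b*b'), hmull b b' a, hanti a b', hanti a b]
    ring
  refine ⟨hanti, haddl, haddr, hmull, hmulr, ?_⟩
  intro a₁ a₂ a₃
  have hcycT := pb_cyclic hTP (PowerSeries.C (R := B) (φ₀ a₁)) (PowerSeries.C (R := B) (φ₀ a₂))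
    (PowerSeries.C (R := B) (φ₀ a₃))
  have h1 := congrArg (PowerSeries.coeff (R := B) (k+1)) hcycT
  simp only [map_add, map_zero] at h1
  rw [hstar a₁ a₂ a₃, hstar a₂ a₃ a₁, hstar a₃ a₁ a₂] at h1
  have hcycπ := pb_cyclic hπ (PowerSeries.C (R := A) a₁) (PowerSeries.C (R := A) a₂) (PowerSeries.C (R := A) a₃)
  have h2 := congrArg (PowerSeries.coeff (R := A) (k+1)) hcycπ
  simp only [map_add, map_zero] at h2
  have h3 := congrArg φ₀ h2
  simp only [map_add, map_zero] at h3
  linear_combination h1 - h3
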